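/- No arc in the plane ℝ² separates ℝ²; that is, if A ⊆ ℝ² is homeomorphic to the unit interval [0,1], then ℝ² \ A is connected. -/

import Mathlib

open Complex Set Metric Real

/-- A nonvanishing continuous function on a compact star-shaped (about `0`) set
has a continuous logarithm. -/
lemma exists_log_of_star {E : Type*} [NormedAddCommGroup E] [NormedSpace ℝ E]
    {K : Set E} (hK : IsCompact K)
    (hstar : ∀ x ∈ K, ∀ s : ℝ, s ∈ Set.Icc (0:ℝ) 1 → s • x ∈ K)
    {f : E → ℂ} (hf : ContinuousOn f K) (h0 : ∀ x ∈ K, f x ≠ 0) :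
    ∃ g : E → ℂ, ContinuousOn g K ∧ ∀ x ∈ K, Complex.exp (g x) = f x := by
  rcases K.eq_empty_or_nonempty with hKe | hne
  · exact ⟨0, by simp [hKe], by simp [hKe]⟩
  have h0K : (0 : E) ∈ K := by
    obtain ⟨x0, hx0⟩ := hne
    simpa using hstar x0 hx0 0 ⟨le_refl 0, zero_le_one⟩
  -- minimum modulus
  obtain ⟨xm, hxm, hmin⟩ := hK.exists_isMinOn hne (hf.norm)
  set m : ℝ := ‖f xm‖ with hm
  have hmpos : 0 < m := by
    simpa [hm, norm_pos_iff] using h0 xm hxm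
  have hmle : ∀ x ∈ K, m ≤ ‖f x‖ := fun x hx => hmin hx
  -- uniform continuity
  have huc := hK.uniformContinuousOn_of_continuous hf
  obtain ⟨δ, hδpos, hδ⟩ := (Metric.uniformContinuousOn_iff).mp huc m hmpos
  -- bound
  obtain ⟨C, hC⟩ := (isBounded_iff_forall_norm_le).mp hK.isBounded
  obtain ⟨n₀, hn₀⟩ := exists_nat_gt (C / δ)
  set n : ℕ := n₀ + 1 with hn
  have hnpos : (0:ℝ) < n := by positivity
  have hCn : C / n < δ := by
    rw [div_lt_iff₀ hnpos]
    have := (div_lt_iff₀ hδpos).mp hn₀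
    have h1 : (n₀:ℝ) ≤ n := by exact_mod_cast Nat.le_succ n₀
    nlinarith
  -- the subdivision points
  set p : ℕ → E → ℂ := fun k x => f (((k : ℝ) / n) • x) with hp
  have hmem : ∀ k ≤ n, ∀ x ∈ K, ((k : ℝ) / n) • x ∈ K := by
    intro k hk x hx
    exact hstar x hx _ ⟨by positivity, by
      rw [div_le_one hnpos]; exact_mod_cast hk⟩
  have hpne : ∀ k ≤ n, ∀ x ∈ K, p k x ≠ 0 := fun k hk x hx => h0 _ (hmem k hk x hx)
  have hpc : ∀ k ≤ n, ContinuousOn (p k) K := by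
    intro k hk
    exact hf.comp (continuous_const_smul _).continuousOn (fun x hx => hmem k hk x hx)
  have hclose : ∀ k, k < n → ∀ x ∈ K, ‖p (k+1) x - p k x‖ < m := by
    intro k hk x hx
    rw [← dist_eq_norm]
    apply hδ _ (hmem (k+1) hk x hx) _ (hmem k (le_of_lt hk) x hx)
    rw [dist_eq_norm, ← sub_smul, norm_smul]
    have : ((k:ℝ)+1)/n - (k:ℝ)/n = 1/n := by field_simp; ring
    rw [show ((k+1 : ℕ) : ℝ) = (k:ℝ)+1 by push_cast; ring, this]
    have hxC : ‖x‖ ≤ C := hC x hx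
    have : ‖(1:ℝ)/n‖ * ‖x‖ ≤ C / n := by
      rw [norm_div, norm_one, Real.norm_natCast]
      rw [div_mul_eq_mul_div, one_mul]
      exact div_le_div_of_nonneg_right hxC hnpos.le |>.trans_eq rfl
    exact lt_of_le_of_lt this hCn
  -- quotients lie in the right half plane
  have hq : ∀ k, k < n → ∀ x ∈ K, 0 < (p (k+1) x / p k x).re := by
    intro k hk x hx
    have hpk := hpne k (le_of_lt hk) x hx
    have h1 : ‖p (k+1) x / p k x - 1‖ < 1 := by
      rw [show p (k+1) x / p k x - 1 = (p (k+1) x - p k x) / p k x by field_simp]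
      rw [norm_div]
      rw [div_lt_one (norm_pos_iff.mpr hpk)]
      exact lt_of_lt_of_le (hclose k hk x hx) (hmle _ (hmem k (le_of_lt hk) x hx))
    have h2 : |(p (k+1) x / p k x - 1).re| ≤ ‖p (k+1) x / p k x - 1‖ :=
      Complex.abs_re_le_norm _
    have h3 : (p (k+1) x / p k x - 1).re = (p (k+1) x / p k x).re - 1 := by simp
    rw [h3] at h2
    cases' abs_le.mp h2 with h4 h5
    linarith [lt_of_le_of_lt (le_abs_self _) (lt_of_le_of_lt h2 h1)]
  refine ⟨fun x => Complex.log (f 0) + ∑ k ∈ Finset.range n, Complex.log (p (k+1) x / p k x),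
    ?_, ?_⟩
  · apply ContinuousOn.add continuousOn_const
    apply continuousOn_finset_sum
    intro k hk
    rw [Finset.mem_range] at hk
    exact ((hpc (k+1) hk).div (hpc k (le_of_lt hk)) (fun x hx => hpne k (le_of_lt hk) x hx)).clog
      (fun x hx => Or.inl (hq k hk x hx))
  · intro x hx
    rw [Complex.exp_add, Complex.exp_sum, Complex.exp_log (h0 0 h0K)]
    have hprod : ∀ M, M ≤ n →
        ∏ k ∈ Finset.range M, Complex.exp (Complex.log (p (k+1) x / p k x)) = p M x / p 0 x := by
      intro M hM
      induction M with
      | zero => simp [div_self (hpne 0 (Nat.zero_le n) x hx)]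
      | succ M ih =>
        rw [Finset.prod_range_succ, ih (le_of_lt hM)]
        rw [Complex.exp_log (div_ne_zero (hpne (M+1) hM x hx) (hpne M (le_of_lt hM) x hx))]
        have h1 := hpne M (Nat.le_of_succ_le hM) x hx
        field_simp
    rw [hprod n le_rfl]
    have hp0 : p 0 x = f 0 := by simp [hp]
    have hpn : p n x = f x := by
      simp only [hp]
      rw [div_self (ne_of_gt hnpos), one_smul]
    rw [hp0, hpn]
    field_simp [h0 x hx, h0 0 h0K]

lemma no_log_on_circle {R : ℝ} (hR : 0 < R) {z0 : ℂ} (hz0 : ‖z0‖ < R)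
    {L : ℂ → ℂ} (hL : ContinuousOn L (Metric.closedBall 0 R))
    (hexp : ∀ z ∈ Metric.sphere (0:ℂ) R, Complex.exp (L z) = z - z0) : False := by
  set γ : ℝ → ℂ := fun t => (R:ℂ) * Complex.exp (2 * π * t * Complex.I) with hγ
  have hγc : Continuous γ := by fun_prop
  have hγabs : ∀ t, ‖γ t‖ = R := by
    intro t
    simp only [hγ, norm_mul, Complex.norm_exp]
    simp [abs_of_pos hR]
  have hγsphere : ∀ t, γ t ∈ Metric.sphere (0:ℂ) R := by
    intro t
    simp [Complex.dist_eq, hγabs t]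
  have hγne : ∀ t, γ t ≠ 0 := by
    intro t h
    have := hγabs t
    rw [h] at this
    simp at this
    exact absurd this (ne_of_gt hR).symm
  set w : ℝ → ℂ := fun t => 1 - z0 * (γ t)⁻¹ with hw
  have hwabs : ∀ t, ‖z0 * (γ t)⁻¹‖ < 1 := by
    intro t
    rw [norm_mul, norm_inv, hγabs t]
    rw [mul_inv_lt_iff₀ hR]
    simpa using hz0
  have hwne : ∀ t, w t ≠ 0 := by
    intro t h
    have h1 : z0 * (γ t)⁻¹ = 1 := by
      have := sub_eq_zero.mp h
      exact this.symm
    have := hwabs t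
    rw [h1] at this
    simp at this
  have hwre : ∀ t, 0 < (w t).re := by
    intro t
    have h1 : |(z0 * (γ t)⁻¹).re| ≤ ‖z0 * (γ t)⁻¹‖ := Complex.abs_re_le_norm _
    have h2 := hwabs t
    simp only [hw, Complex.sub_re, Complex.one_re]
    cases' abs_le.mp h1 with h3 h4
    linarith
  have hwc : Continuous w := by
    apply Continuous.sub continuous_const
    exact Continuous.mul continuous_const (Continuous.inv₀ hγc hγne)
  set m : ℝ → ℂ := fun t => (Real.log R : ℂ) + 2 * π * t * Complex.I + Complex.log (w t) with hm
  have hmc : Continuous m := by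
    apply Continuous.add
    · fun_prop
    · exact hwc.clog (fun t => Or.inl (hwre t))
  have hexpm : ∀ t, Complex.exp (m t) = γ t - z0 := by
    intro t
    rw [hm]
    simp only
    rw [Complex.exp_add, Complex.exp_add, Complex.exp_log (hwne t)]
    have h1 : Complex.exp ((Real.log R : ℂ)) = (R:ℂ) := by
      rw [← Complex.ofReal_exp, Real.exp_log hR]
    rw [h1, hw]
    have hRne : (R:ℂ) ≠ 0 := by exact_mod_cast (ne_of_gt hR)
    field_simp [hγne t]
    rfl
  set ℓ : ℝ → ℂ := fun t => L (γ t) with hℓ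
  have hℓc : ContinuousOn ℓ (Set.Icc 0 1) := by
    apply (hL.comp hγc.continuousOn ?_)
    intro t _
    exact Metric.sphere_subset_closedBall (hγsphere t)
  have hexpℓ : ∀ t, Complex.exp (ℓ t) = γ t - z0 := fun t => hexp _ (hγsphere t)
  have hint : ∀ t, ∃ k : ℤ, ℓ t - m t = k * (2 * π * Complex.I) := by
    intro t
    have : Complex.exp (ℓ t) = Complex.exp (m t) := by rw [hexpℓ t, hexpm t]
    obtain ⟨k, hk⟩ := Complex.exp_eq_exp_iff_exists_int.mp this
    exact ⟨k, by rw [hk]; ring⟩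
  set v : ℝ → ℝ := fun t => (ℓ t - m t).im / (2 * π) with hv
  have hvc : ContinuousOn v (Set.Icc 0 1) := by
    apply ContinuousOn.div_const
    exact Complex.continuous_im.comp_continuousOn (hℓc.sub hmc.continuousOn)
  have hvint : ∀ t, ∃ k : ℤ, v t = k := by
    intro t
    obtain ⟨k, hk⟩ := hint t
    refine ⟨k, ?_⟩
    rw [hv]
    simp only [hk]
    have : ((k : ℂ) * (2 * π * Complex.I)).im = k * (2 * π) := by
      simp [Complex.mul_im]
    rw [this]
    field_simp
  -- γ 1 = γ 0 and the log terms agree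
  have hγ10 : γ 1 = γ 0 := by
    simp only [hγ]
    have h1 : (2 * (π:ℂ) * ((1:ℝ):ℂ) * Complex.I) = 2 * π * Complex.I := by push_cast; ring
    have h0 : (2 * (π:ℂ) * ((0:ℝ):ℂ) * Complex.I) = 0 := by push_cast; ring
    rw [h1, h0, Complex.exp_two_pi_mul_I, Complex.exp_zero]
  have hv10 : v 1 = v 0 - 1 := by
    have hℓ10 : ℓ 1 = ℓ 0 := by rw [hℓ]; simp only [hγ10]
    have hw10 : w 1 = w 0 := by rw [hw]; simp only [hγ10]
    have hm10 : m 1 - m 0 = 2 * π * Complex.I := by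
      simp only [hm, hw10]
      push_cast
      ring
    rw [hv]
    simp only
    rw [hℓ10]
    have : (ℓ 0 - m 1) = (ℓ 0 - m 0) - 2 * π * Complex.I := by
      rw [← hm10]; ring
    rw [this]
    have him : ((ℓ 0 - m 0) - 2 * π * Complex.I).im = (ℓ 0 - m 0).im - 2 * π := by
      simp [Complex.sub_im]
    rw [him]
    have hπ : (2 * π) ≠ 0 := by positivity
    field_simp
  -- IVT contradiction
  obtain ⟨k0, hk0⟩ := hvint 0
  obtain ⟨k1, hk1⟩ := hvint 1
  have hk10 : (k1 : ℝ) = k0 - 1 := by rw [← hk0, ← hk1, hv10]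
  have hmem : (k0 : ℝ) - 1/2 ∈ Set.Icc (v 1) (v 0) := by
    rw [hk0, hk1, hk10]
    constructor <;> linarith
  have := intermediate_value_Icc' (by norm_num : (0:ℝ) ≤ 1) hvc hmem
  obtain ⟨t, _, ht⟩ := this
  obtain ⟨k, hk⟩ := hvint t
  rw [hk] at ht
  have : (2 * k : ℝ) = 2 * k0 - 1 := by linarith
  have h2 : (2 * k : ℤ) = 2 * k0 - 1 := by exact_mod_cast this
  omega

lemma connected_compl_closedBall {r : ℝ} (hr : 1 ≤ r) :
    IsConnected (Metric.closedBall (0:ℂ) r)ᶜ := by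
  have hr0 : 0 < r := lt_of_lt_of_le zero_lt_one hr
  have hrank : 1 < Module.rank ℝ ℂ := by
    rw [Complex.rank_real_complex]; norm_num
  have hs : IsConnected (Metric.sphere (0:ℂ) 1) := isConnected_sphere hrank 0 zero_le_one
  have hI : IsConnected (Set.Ioi r) := isConnected_Ioi
  have hprod := hI.prod hs
  have himg := hprod.image (fun p : ℝ × ℂ => (p.1 : ℂ) * p.2)
    (by fun_prop : Continuous fun p : ℝ × ℂ => (p.1 : ℂ) * p.2).continuousOn
  convert himg using 1
  ext z
  simp only [Set.mem_compl_iff, Metric.mem_closedBall, Complex.dist_eq, sub_zero, not_le,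
    Set.mem_image, Set.mem_prod, Set.mem_Ioi, Metric.mem_sphere, Prod.exists]
  constructor
  · intro hz
    have hz0 : z ≠ 0 := by
      intro h; rw [h] at hz; simp at hz; linarith
    have habs : ‖z‖ ≠ 0 := by simpa using hz0
    refine ⟨‖z‖, ((‖z‖ : ℂ))⁻¹ * z, ⟨hz, ?_⟩, ?_⟩
    · rw [norm_mul, norm_inv, Complex.norm_real, norm_norm]
      field_simp
    · have : ((‖z‖ : ℂ)) ≠ 0 := by exact_mod_cast habs
      field_simp
  · rintro ⟨s, u, ⟨hs', hu⟩, rfl⟩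
    have hs0 : 0 < s := lt_of_lt_of_le hr0 hs'.le
    rw [norm_mul, Complex.norm_real, Real.norm_of_nonneg hs0.le, hu, mul_one]
    exact hs'


/-- If every function `z - z0` (for `z0` outside a compact set `B`) admits a continuous
logarithm on `B`, then the complement of `B` is connected. -/
lemma compl_connected_of_logs {B : Set ℂ} (hB : IsCompact B)
    (hlog : ∀ z0 ∉ B, ∃ g : ℂ → ℂ, ContinuousOn g B ∧
      ∀ z ∈ B, Complex.exp (g z) = z - z0) :
    IsConnected Bᶜ := by
  classical
  have hBc : IsClosed B := hB.isClosed
  obtain ⟨r0, hr0⟩ := hB.isBounded.subset_closedBall 0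
  set r : ℝ := max r0 1 with hrdef
  have hr1 : 1 ≤ r := le_max_right _ _
  have hr0' : 0 < r := lt_of_lt_of_le zero_lt_one hr1
  have hBr : B ⊆ Metric.closedBall 0 r :=
    hr0.trans (Metric.closedBall_subset_closedBall (le_max_left _ _))
  set V : Set ℂ := (Metric.closedBall (0:ℂ) r)ᶜ with hVdef
  have hVconn : IsConnected V := connected_compl_closedBall hr1
  have hVB : V ⊆ Bᶜ := Set.compl_subset_compl.mpr hBr
  obtain ⟨w0, hw0V⟩ := hVconn.nonempty
  set W : Set ℂ := connectedComponentIn Bᶜ w0 with hWdef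
  have hw0Bc : w0 ∈ Bᶜ := hVB hw0V
  have hVW : V ⊆ W := hVconn.isPreconnected.subset_connectedComponentIn hw0V hVB
  suffices hsub : Bᶜ ⊆ W by
    have hWB : W ⊆ Bᶜ := connectedComponentIn_subset _ _
    have hBW : Bᶜ = W := le_antisymm hsub hWB
    rw [hBW]
    exact ⟨⟨w0, mem_connectedComponentIn hw0Bc⟩, isPreconnected_connectedComponentIn⟩
  intro z0 hz0
  by_contra hz0W
  set U : Set ℂ := connectedComponentIn Bᶜ z0 with hUdef
  have hU_open : IsOpen U := hBc.isOpen_compl.connectedComponentIn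
  have hz0U : z0 ∈ U := mem_connectedComponentIn hz0
  have hUW : ∀ y, y ∈ U → y ∈ W → False := by
    intro y hyU hyW
    have h1 : U = connectedComponentIn Bᶜ y := connectedComponentIn_eq hyU
    have h2 : W = connectedComponentIn Bᶜ y := connectedComponentIn_eq hyW
    exact hz0W ((h1.trans h2.symm) ▸ hz0U)
  have hUball : U ⊆ Metric.closedBall 0 r := by
    intro u hu
    by_contra h
    exact hUW u hu (hVW h)
  -- continuous logarithm on B
  have hz0B : z0 ∉ B := hz0
  obtain ⟨g, hgc, hge⟩ := hlog z0 hz0B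
  -- Tietze extension
  obtain ⟨G, hG⟩ := ContinuousMap.exists_restrict_eq (Y := ℂ) hBc
    ⟨B.restrict g, hgc.restrict⟩
  have hGB : ∀ z ∈ B, G z = g z := by
    intro z hz
    have := congrFun (congrArg ContinuousMap.toFun hG) ⟨z, hz⟩
    exact this
  -- frontier of U is inside B
  have hfrontier : frontier U ⊆ B := by
    intro x hx
    by_contra hxB
    have hxBc : x ∈ Bᶜ := hxB
    rw [hU_open.frontier_eq] at hx
    obtain ⟨hxcl, hxU⟩ := hx
    set U' : Set ℂ := connectedComponentIn Bᶜ x with hU'def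
    have hU'open : IsOpen U' := hBc.isOpen_compl.connectedComponentIn
    have hxU' : x ∈ U' := mem_connectedComponentIn hxBc
    obtain ⟨y, hyU', hyU⟩ := mem_closure_iff.mp hxcl U' hU'open hxU'
    have h1 : U' = connectedComponentIn Bᶜ y := connectedComponentIn_eq hyU'
    have h2 : U = connectedComponentIn Bᶜ y := connectedComponentIn_eq hyU
    exact hxU ((h1.trans h2.symm) ▸ hxU')
  -- glue
  set F : ℂ → ℂ := Set.piecewise U (fun z => z0 + Complex.exp (G z)) id with hFdef
  have hFcont : Continuous F := by
    apply continuous_piecewise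
    · intro a ha
      have haB : a ∈ B := hfrontier ha
      simp only [id_eq]
      rw [hGB a haB, hge a haB]
      ring
    · exact (continuous_const.add (Complex.continuous_exp.comp G.continuous)).continuousOn
    · exact continuous_id.continuousOn
  have hFne : ∀ z, F z ≠ z0 := by
    intro z
    by_cases hz : z ∈ U
    · rw [hFdef, Set.piecewise_eq_of_mem _ _ _ hz]
      intro h
      have : Complex.exp (G z) = 0 := by linear_combination h
      exact Complex.exp_ne_zero _ this
    · rw [hFdef, Set.piecewise_eq_of_notMem _ _ _ hz]
      intro h
      rw [id_eq] at h
      exact hz (h ▸ hz0U)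
  set R : ℝ := r + 1 with hRdef
  have hRpos : 0 < R := by positivity
  have hz0R : ‖z0‖ < R := by
    have := hUball hz0U
    rw [Metric.mem_closedBall, Complex.dist_eq, sub_zero] at this
    linarith
  -- continuous logarithm of F - z0 on the closed ball
  obtain ⟨L, hLc, hLe⟩ := exists_log_of_star (K := Metric.closedBall (0:ℂ) R)
    (isCompact_closedBall 0 R)
    (by
      intro x hx s hs
      rw [Metric.mem_closedBall, dist_zero_right] at hx ⊢
      rw [norm_smul, Real.norm_eq_abs, _root_.abs_of_nonneg hs.1]
      nlinarith [norm_nonneg x, hs.1, hs.2])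
    ((hFcont.sub continuous_const).continuousOn)
    (fun x _ => sub_ne_zero.mpr (hFne x))
  exact no_log_on_circle hRpos hz0R hLc (by
      intro z hz
      have hzball : z ∈ Metric.closedBall (0:ℂ) R := Metric.sphere_subset_closedBall hz
      have h1 := hLe z hzball
      have hznU : z ∉ U := by
        intro hzz
        have := hUball hzz
        rw [Metric.mem_closedBall, Complex.dist_eq, sub_zero] at this
        rw [Metric.mem_sphere, Complex.dist_eq, sub_zero] at hz
        rw [hz] at this
        linarith
      rw [hFdef] at h1
      rw [Pi.sub_apply] at h1
      rw [Set.piecewise_eq_of_notMem _ _ _ hznU, id_eq] at h1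
      exact h1)

/-- No arc in the plane separates the plane: if `A ⊆ ℝ²` is homeomorphic to `[0,1]`,
then its complement is connected. -/
theorem stmt_3 (A : Set (ℝ × ℝ))
    (hA : Nonempty (A ≃ₜ (Set.Icc (0 : ℝ) 1))) :
    IsConnected Aᶜ := by
  classical
  obtain ⟨φ⟩ := hA
  set e : ℂ ≃ₜ ℝ × ℝ := Complex.equivRealProdCLM.toHomeomorph with hedef
  set B : Set ℂ := e.symm '' A with hBdef
  -- A is compact
  have hAcs : CompactSpace (Set.Icc (0:ℝ) 1) := by infer_instance
  have hAcomp : IsCompact A := by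
    rw [isCompact_iff_compactSpace]
    exact φ.symm.compactSpace
  have hBcomp : IsCompact B := hAcomp.image e.symm.continuous
  -- homeomorphism from B to the interval
  set χ : B ≃ₜ (Set.Icc (0:ℝ) 1) := ((e.symm.image A).symm).trans φ with hχdef
  -- the log hypothesis
  have hlog : ∀ z0 ∉ B, ∃ g : ℂ → ℂ, ContinuousOn g B ∧
      ∀ z ∈ B, Complex.exp (g z) = z - z0 := by
    intro z0 hz0
    set h : (Set.Icc (0:ℝ) 1) → ℂ := fun t => ((χ.symm t : ℂ)) - z0 with hhdef
    have hhc : Continuous h :=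
      (continuous_subtype_val.comp χ.symm.continuous).sub continuous_const
    set fR : ℝ → ℂ := fun t => h (Set.projIcc 0 1 zero_le_one t) with hfRdef
    have hfRc : Continuous fR := hhc.comp continuous_projIcc
    have hfRne : ∀ x ∈ Set.Icc (0:ℝ) 1, fR x ≠ 0 := by
      intro x hx
      rw [hfRdef]
      simp only [Set.projIcc_of_mem zero_le_one hx]
      exact sub_ne_zero.mpr (fun hcontra => hz0 (hcontra ▸ (χ.symm ⟨x, hx⟩).2))
    obtain ⟨gR, hgRc, hgRe⟩ := exists_log_of_star (K := Set.Icc (0:ℝ) 1) isCompact_Icc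
      (by
        intro x hx s hs
        constructor
        · exact mul_nonneg hs.1 hx.1
        · calc s * x ≤ 1 * 1 := mul_le_mul hs.2 hx.2 hx.1 zero_le_one
              _ = 1 := by ring)
      hfRc.continuousOn hfRne
    set gB : B → ℂ := fun b => gR ((χ b : ℝ)) with hgBdef
    have hgBc : Continuous gB :=
      hgRc.comp_continuous (continuous_subtype_val.comp χ.continuous) (fun b => (χ b).2)
    refine ⟨fun z => if hz : z ∈ B then gB ⟨z, hz⟩ else 0, ?_, ?_⟩
    · rw [continuousOn_iff_continuous_restrict]
      convert hgBc using 1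
      ext b
      simp [Set.restrict, b.2]
    · intro z hz
      simp only [dif_pos hz]
      rw [hgBdef]
      simp only
      rw [hgRe _ (χ ⟨z, hz⟩).2]
      rw [hfRdef]
      simp only [Set.projIcc_of_mem zero_le_one (χ ⟨z, hz⟩).2]
      rw [hhdef]
      simp only [Subtype.coe_eta]
      rw [χ.symm_apply_apply]
  have hBconn : IsConnected Bᶜ := compl_connected_of_logs hBcomp hlog
  -- transfer back
  have himg : e '' Bᶜ = Aᶜ := by
    rw [hBdef]
    rw [show (e.symm '' A)ᶜ = e.symm '' Aᶜ from (Equiv.image_compl e.symm.toEquiv A).symm]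
    rw [Set.image_image]
    simp
  have := hBconn.image e e.continuous.continuousOn
  rwa [himg] at this
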